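/- Characterization of Pauli channels representable with nonnegative Pauli-Lindblad parameters (Proposition 2, Pauli-Lindblad form): let p : V → ℝ be a probability distribution (p_a ≥ 0 for all a, Σ_a p_a = 1), set f_a = Σ_{k ∈ V} χ(a,k)·p_k and assume f_a > 0 for all a ∈ V, and let E_p be the Pauli channel E_p(ρ) = Σ_{a ∈ V} p_a·P_a ρ P_a. Then there exists λ : V → ℝ with λ_a ≥ 0 for all a and E_p = exp(Σ_{a ∈ V} λ_a·(P_a · P_a − ·)) (the exponential of the Pauli-Lindblad generator with parameters λ) if and only if for every a ∈ V with a ≠ 0 one has Σ_{k ∈ V, k ≠ 0} χ(a,k)·Real.log(f_k) ≥ 0. -/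

import Mathlib

/-- Index set of `n`-qubit Pauli words. -/
abbrev V (n : ℕ) : Type := (Fin n → ZMod 2) × (Fin n → ZMod 2)

/-- Symplectic inner product `⟨a,b⟩ = Σᵢ (aₓᵢ·b_zᵢ + a_zᵢ·bₓᵢ) ∈ ZMod 2`. -/
def sform {n : ℕ} (a b : V n) : ZMod 2 := ∑ i, (a.1 i * b.2 i + a.2 i * b.1 i)

/-- The sign `χ(a,b) = (−1)^⟨a,b⟩ ∈ ℝ`. -/
noncomputable def chi {n : ℕ} (a b : V n) : ℝ := (-1 : ℝ) ^ (sform a b).val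

/-- Integer (real-valued) lift `⟨a,b⟩_ℤ ∈ {0,1} ⊂ ℝ`. -/
noncomputable def sformZ {n : ℕ} (a b : V n) : ℝ := ((sform a b).val : ℝ)

/-- The single-qubit Pauli factor `i^(aₓ·a_z) · X^(aₓ) · Z^(a_z)`. -/
noncomputable def pauli1 (ax az : ZMod 2) : Matrix (Fin 2) (Fin 2) ℂ :=
  (Complex.I ^ (ax.val * az.val)) •
    ((!![0, 1; 1, 0] : Matrix (Fin 2) (Fin 2) ℂ) ^ ax.val *
     (!![1, 0; 0, -1] : Matrix (Fin 2) (Fin 2) ℂ) ^ az.val)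

/-- The space of `2^n × 2^n` complex matrices (indexed by `Fin n → Fin 2`). -/
abbrev Mq (n : ℕ) : Type := Matrix (Fin n → Fin 2) (Fin n → Fin 2) ℂ

/-- The `n`-qubit Pauli word `P_a`, the Kronecker product over `i ∈ Fin n`
of `i^(aₓᵢ·a_zᵢ)·X^(aₓᵢ)·Z^(a_zᵢ)`. -/
noncomputable def P {n : ℕ} (a : V n) : Mq n :=
  Matrix.of fun x y => ∏ i, pauli1 (a.1 i) (a.2 i) (x i) (y i)

attribute [local instance] Matrix.linftyOpNormedAddCommGroup Matrix.linftyOpNormedRing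
  Matrix.linftyOpNormedAlgebra

attribute [-instance] instTopologicalSpaceMatrix Matrix.instUniformSpace

set_option linter.unreachableTactic false
set_option linter.unusedTactic false
set_option linter.unusedVariables false
set_option maxHeartbeats 1000000

lemma zmod2_cases (x : ZMod 2) : x = 0 ∨ x = 1 := by
  revert x; decide

lemma val_one2 : (1 : ZMod 2).val = 1 := rfl
lemma val_zero2 : (0 : ZMod 2).val = 0 := rfl
lemma val_two2 : (2 : ZMod 2).val = 0 := rfl

lemma pauli1_mul_self (ax az : ZMod 2) : pauli1 ax az * pauli1 ax az = 1 := by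
  rcases zmod2_cases ax with h | h <;> rcases zmod2_cases az with h' | h' <;>
    subst h h' <;>
    ext i j <;> fin_cases i <;> fin_cases j <;>
    simp [pauli1, val_one2, val_zero2, val_two2, Matrix.mul_apply, Fin.sum_univ_two,
      Matrix.one_apply] <;>
    (try ring_nf) <;> (try simp [Complex.I_sq, val_two2]) <;> (try ring)

lemma pauli1_conj (ax az bx bz : ZMod 2) :
    pauli1 ax az * pauli1 bx bz * pauli1 ax az
      = ((-1 : ℂ) ^ ((ax * bz + az * bx : ZMod 2).val)) • pauli1 bx bz := by
  rcases zmod2_cases ax with h | h <;> rcases zmod2_cases az with h' | h' <;>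
  rcases zmod2_cases bx with h'' | h'' <;> rcases zmod2_cases bz with h''' | h''' <;>
    subst h h' h'' h''' <;>
    ext i j <;> fin_cases i <;> fin_cases j <;>
    simp [pauli1, val_one2, val_zero2, val_two2, Matrix.mul_apply, Fin.sum_univ_two] <;>
    (try ring_nf) <;> (try simp [Complex.I_sq, val_two2]) <;> (try ring)

lemma pauli1_trace_mul (ax az bx bz : ZMod 2) :
    Matrix.trace (pauli1 ax az * pauli1 bx bz)
      = if ax = bx ∧ az = bz then 2 else 0 := by
  rcases zmod2_cases ax with h | h <;> rcases zmod2_cases az with h' | h' <;>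
  rcases zmod2_cases bx with h'' | h'' <;> rcases zmod2_cases bz with h''' | h''' <;>
    subst h h' h'' h''' <;>
    simp [pauli1, val_one2, val_zero2, val_two2, Matrix.trace, Matrix.diag,
      Matrix.mul_apply, Fin.sum_univ_two] <;>
    (try ring_nf) <;> (try simp [Complex.I_sq, val_two2]) <;> (try ring_nf)

/-- General Kronecker multiplication. -/
lemma kron_mul {n : ℕ} (Q R : Fin n → Matrix (Fin 2) (Fin 2) ℂ) :
    (Matrix.of fun x y : Fin n → Fin 2 => ∏ i, Q i (x i) (y i)) *
      (Matrix.of fun x y : Fin n → Fin 2 => ∏ i, R i (x i) (y i))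
      = Matrix.of fun x y : Fin n → Fin 2 => ∏ i, (Q i * R i) (x i) (y i) := by
  ext x y
  simp only [Matrix.mul_apply, Matrix.of_apply]
  symm
  calc ∏ i, (Q i * R i) (x i) (y i)
      = ∏ i, ∑ z : Fin 2, Q i (x i) z * R i z (y i) :=
        Finset.prod_congr rfl fun i _ => Matrix.mul_apply
    _ = ∑ g ∈ Fintype.piFinset (fun _ : Fin n => (Finset.univ : Finset (Fin 2))),
          ∏ i, Q i (x i) (g i) * R i (g i) (y i) := Finset.prod_univ_sum _ _
    _ = ∑ g : Fin n → Fin 2, (∏ i, Q i (x i) (g i)) * ∏ i, R i (g i) (y i) := by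
        rw [Fintype.piFinset_univ]
        exact Finset.sum_congr rfl fun g _ => Finset.prod_mul_distrib

lemma kron_trace {n : ℕ} (Q : Fin n → Matrix (Fin 2) (Fin 2) ℂ) :
    Matrix.trace (Matrix.of fun x y : Fin n → Fin 2 => ∏ i, Q i (x i) (y i))
      = ∏ i, Matrix.trace (Q i) := by
  simp only [Matrix.trace, Matrix.diag, Matrix.of_apply]
  rw [show (∏ i, ∑ j : Fin 2, Q i j j : ℂ) = _ from Finset.prod_univ_sum _ _,
    Fintype.piFinset_univ]

lemma P_mul_P_self {n : ℕ} (a : V n) : P a * P a = 1 := by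
  rw [P, kron_mul]
  ext x y
  simp only [Matrix.of_apply, pauli1_mul_self]
  simp [Matrix.one_apply, Finset.prod_boole, funext_iff]

lemma neg_one_val_add (x y : ZMod 2) :
    (-1 : ℂ) ^ ((x + y).val) = (-1 : ℂ) ^ x.val * (-1 : ℂ) ^ y.val := by
  rcases zmod2_cases x with h | h <;> rcases zmod2_cases y with h' | h' <;>
    subst h h' <;>
    norm_num [show ((1:ZMod 2)+1).val = 0 from rfl, show (2:ZMod 2).val = 0 from rfl, show (1:ZMod 2).val = 1 from rfl,
      show (0:ZMod 2).val = 0 from rfl]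

lemma neg_one_val_sum {n : ℕ} (c : Fin n → ZMod 2) :
    (-1 : ℂ) ^ ((∑ i, c i).val) = ∏ i, (-1 : ℂ) ^ ((c i).val) := by
  classical
  induction (Finset.univ : Finset (Fin n)) using Finset.induction_on with
  | empty => simp [show (0 : ZMod 2).val = 0 from rfl]
  | insert x s h ih => rw [Finset.sum_insert h, Finset.prod_insert h, neg_one_val_add, ih]

lemma P_conj {n : ℕ} (a b : V n) :
    P a * P b * P a = ((chi a b : ℂ)) • P b := by
  rw [P, P, kron_mul, kron_mul]
  ext x y
  simp only [Matrix.of_apply, pauli1_conj, Matrix.smul_apply, smul_eq_mul]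
  rw [Finset.prod_mul_distrib]
  congr 1
  rw [chi, sform]
  push_cast
  rw [neg_one_val_sum]

lemma P_trace_mul {n : ℕ} (a b : V n) :
    Matrix.trace (P a * P b) = if a = b then (2 : ℂ) ^ n else 0 := by
  rw [P, P, kron_mul, kron_trace]
  simp only [pauli1_trace_mul]
  by_cases h : a = b
  · subst h; simp
  · rw [if_neg h]
    have : ∃ i, ¬(a.1 i = b.1 i ∧ a.2 i = b.2 i) := by
      by_contra hc
      push_neg at hc
      exact h (Prod.ext (funext fun i => (hc i).1) (funext fun i => (hc i).2))
    obtain ⟨i, hi⟩ := this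
    exact Finset.prod_eq_zero (Finset.mem_univ i) (by rw [if_neg hi])

lemma neg_one_val_add' (x y : ZMod 2) :
    (-1 : ℝ) ^ ((x + y).val) = (-1 : ℝ) ^ x.val * (-1 : ℝ) ^ y.val := by
  rcases zmod2_cases x with h | h <;> rcases zmod2_cases y with h' | h' <;>
    subst h h' <;>
    norm_num [show ((1:ZMod 2)+1).val = 0 from rfl, show (2:ZMod 2).val = 0 from rfl,
      show (1:ZMod 2).val = 1 from rfl, show (0:ZMod 2).val = 0 from rfl]

lemma sform_comm {n : ℕ} (a b : V n) : sform a b = sform b a := by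
  unfold sform; exact Finset.sum_congr rfl fun i _ => by ring

lemma sform_add_left {n : ℕ} (a a' b : V n) :
    sform (a + a') b = sform a b + sform a' b := by
  unfold sform
  rw [← Finset.sum_add_distrib]
  exact Finset.sum_congr rfl fun i _ => by
    simp only [Prod.fst_add, Prod.snd_add, Pi.add_apply]; ring

lemma chi_add_left {n : ℕ} (a a' b : V n) :
    chi (a + a') b = chi a b * chi a' b := by
  rw [chi, chi, chi, sform_add_left, neg_one_val_add']

lemma sform_zero_left {n : ℕ} (b : V n) : sform 0 b = 0 := by
  unfold sform; simp

lemma chi_zero_left {n : ℕ} (b : V n) : chi 0 b = 1 := by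
  rw [chi, sform_zero_left]; simp [show (0:ZMod 2).val = 0 from rfl]

lemma chi_comm {n : ℕ} (a b : V n) : chi a b = chi b a := by
  rw [chi, chi, sform_comm]

lemma chi_zero_right {n : ℕ} (a : V n) : chi a 0 = 1 := by
  rw [chi_comm, chi_zero_left]

/-- Key character sum. -/
lemma sum_chi {n : ℕ} (c : V n) :
    ∑ a : V n, chi a c = if c = 0 then (Fintype.card (V n) : ℝ) else 0 := by
  by_cases h : c = 0
  · subst h
    simp [chi_zero_right, Finset.card_univ]
  · rw [if_neg h]
    -- find b₀ with chi b₀ c = -1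
    have hb : ∃ b₀ : V n, chi b₀ c = -1 := by
      have hne : c.1 ≠ 0 ∨ c.2 ≠ 0 := by
        by_contra hc
        push_neg at hc
        exact h (Prod.ext hc.1 hc.2)
      have key : ∀ (j : Fin n), (c.1 j = 1 ∨ c.2 j = 1) → ∃ b₀ : V n, chi b₀ c = -1 := by
        intro j hj
        rcases hj with hj | hj
        · refine ⟨(0, Pi.single j 1), ?_⟩
          have : sform ((0, Pi.single j 1) : V n) c = 1 := by
            unfold sform
            simp [Pi.single_apply, Finset.sum_ite_eq', hj]
          rw [chi, this]
          norm_num [show (1:ZMod 2).val = 1 from rfl]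
        · refine ⟨(Pi.single j 1, 0), ?_⟩
          have : sform ((Pi.single j 1, 0) : V n) c = 1 := by
            unfold sform
            simp [Pi.single_apply, Finset.sum_ite_eq', hj]
          rw [chi, this]
          norm_num [show (1:ZMod 2).val = 1 from rfl]
      rcases hne with hne | hne
      · obtain ⟨j, hj⟩ := Function.ne_iff.mp hne
        refine key j (Or.inl ?_)
        rcases zmod2_cases (c.1 j) with h' | h'
        · exact absurd h' hj
        · exact h'
      · obtain ⟨j, hj⟩ := Function.ne_iff.mp hne
        refine key j (Or.inr ?_)
        rcases zmod2_cases (c.2 j) with h' | h'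
        · exact absurd h' hj
        · exact h'
    obtain ⟨b₀, hb₀⟩ := hb
    have h1 : ∑ a : V n, chi a c = ∑ a : V n, chi (a + b₀) c :=
      (Fintype.sum_equiv (Equiv.addRight b₀) _ _ fun a => rfl).symm
    have h2 : ∑ a : V n, chi (a + b₀) c = -∑ a : V n, chi a c := by
      rw [← Finset.sum_neg_distrib]
      exact Finset.sum_congr rfl fun a _ => by rw [chi_add_left, hb₀]; ring
    linarith [h1, h2]

lemma V_add_self {n : ℕ} (v : V n) : v + v = 0 :=
  Prod.ext (funext fun _ => CharTwo.add_self_eq_zero _)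
    (funext fun _ => CharTwo.add_self_eq_zero _)

lemma sum_chi_mul {n : ℕ} (k b : V n) :
    ∑ a : V n, chi a k * chi a b = if k = b then (Fintype.card (V n) : ℝ) else 0 := by
  have h1 : ∀ a : V n, chi a k * chi a b = chi a (k + b) := by
    intro a
    rw [chi_comm a k, chi_comm a b, chi_comm a (k+b), chi_add_left]
  simp only [h1]
  have h2 : ∀ a : V n, chi a (k+b) = chi (k+b) a := fun a => chi_comm _ _
  simp only [h2]
  rw [show (∑ a : V n, chi (k+b) a) = ∑ a : V n, chi a (k+b) from
    Finset.sum_congr rfl fun a _ => (chi_comm _ _).symm, sum_chi]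
  have heq : (k + b = 0) ↔ (k = b) := by
    constructor
    · intro hkb
      have : k + b + b = b := by rw [hkb]; rw [zero_add]
      rwa [add_assoc, V_add_self, add_zero] at this
    · rintro rfl
      exact V_add_self k
  simp [heq]

lemma exp_eigen {n : ℕ} (A : Mq n →L[ℂ] Mq n) (c : ℂ) (x : Mq n) (h : A x = c • x) :
    NormedSpace.exp A x = Complex.exp c • x := by
  have hpow : ∀ k : ℕ, (A ^ k) x = c ^ k • x := by
    intro k
    induction k with
    | zero => simp
    | succ k ih =>
        rw [pow_succ, pow_succ]
        calc (A ^ k * A) x = (A ^ k) (A x) := rfl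
          _ = (A ^ k) (c • x) := by rw [h]
          _ = c • ((A ^ k) x) := by rw [map_smul]
          _ = c • (c ^ k • x) := by rw [ih]
          _ = (c ^ k * c) • x := by rw [smul_smul, mul_comm]
  have hsummable : Summable fun k : ℕ => ((k.factorial : ℂ))⁻¹ • A ^ k :=
    NormedSpace.expSeries_summable' A
  rw [NormedSpace.exp_eq_tsum (𝕂 := ℂ)]
  have happ := (ContinuousLinearMap.apply ℂ (Mq n) x).map_tsum hsummable
  rw [show (∑' k : ℕ, ((k.factorial : ℂ))⁻¹ • A ^ k) x
      = (ContinuousLinearMap.apply ℂ (Mq n) x) (∑' k : ℕ, ((k.factorial : ℂ))⁻¹ • A ^ k) from rfl,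
    happ]
  simp only [ContinuousLinearMap.apply_apply, ContinuousLinearMap.smul_apply, hpow]
  have hsum2 : Summable fun k : ℕ => ((k.factorial : ℂ))⁻¹ • c ^ k :=
    NormedSpace.expSeries_summable' c
  calc (∑' k : ℕ, ((k.factorial : ℂ))⁻¹ • c ^ k • x)
      = ∑' k : ℕ, (((k.factorial : ℂ))⁻¹ • c ^ k) • x := by
        simp only [smul_smul, smul_eq_mul]
    _ = (∑' k : ℕ, ((k.factorial : ℂ))⁻¹ • c ^ k) • x := by
        rw [Summable.tsum_smul_const hsum2]
    _ = Complex.exp c • x := by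
        congr 1
        rw [Complex.exp_eq_exp_ℂ]
        exact (congrFun (NormedSpace.exp_eq_tsum (𝕂 := ℂ)) c).symm

lemma P_linearIndependent (n : ℕ) : LinearIndependent ℂ (P (n := n)) := by
  rw [Fintype.linearIndependent_iff]
  intro g hg a
  have h := congrArg (fun M => Matrix.trace (P a * M)) hg
  simp only [Finset.mul_sum, Matrix.mul_smul, Matrix.trace_sum, Matrix.trace_smul,
    Matrix.mul_zero, Matrix.trace_zero] at h
  simp only [P_trace_mul, smul_eq_mul, mul_ite, mul_zero] at h
  rw [Finset.sum_ite_eq Finset.univ a (fun x => g x * 2 ^ n)] at h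
  simp only [Finset.mem_univ, if_true] at h
  have h2 : (2 : ℂ) ^ n ≠ 0 := pow_ne_zero _ two_ne_zero
  -- h : g a * 2 ^ n = 0
  rcases mul_eq_zero.mp h with h' | h'
  · exact h'
  · exact absurd h' h2

lemma P_span_top (n : ℕ) : Submodule.span ℂ (Set.range (P (n := n))) = ⊤ := by
  have hcard : Fintype.card (V n) = Module.finrank ℂ (Mq n) := by
    rw [Module.finrank_matrix]
    simp [Fintype.card_prod, Fintype.card_fun]
  exact (P_linearIndependent n).span_eq_top_of_card_eq_finrank hcard

lemma fourier_fwd {n : ℕ} (lam : V n → ℝ) (a : V n) (ha : a ≠ 0) :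
    ∑ k : V n, chi a k * (∑ a' : V n, lam a' * (chi a' k - 1))
      = (Fintype.card (V n) : ℝ) * lam a := by
  calc ∑ k : V n, chi a k * (∑ a' : V n, lam a' * (chi a' k - 1))
      = ∑ k : V n, ∑ a' : V n, chi a k * (lam a' * (chi a' k - 1)) := by
        simp [Finset.mul_sum]
    _ = ∑ a' : V n, ∑ k : V n, chi a k * (lam a' * (chi a' k - 1)) := Finset.sum_comm
    _ = ∑ a' : V n, lam a' * ((∑ k : V n, chi k a * chi k a') - ∑ k : V n, chi k a) := by
        refine Finset.sum_congr rfl fun a' _ => ?_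
        have h : ∀ k : V n, chi a k * (lam a' * (chi a' k - 1))
            = lam a' * (chi k a * chi k a' - chi k a) := fun k => by
          rw [chi_comm k a, chi_comm k a']; ring
        rw [Finset.sum_congr rfl fun k _ => h k, ← Finset.mul_sum,
          Finset.sum_sub_distrib]
    _ = ∑ a' : V n, lam a' * (if a = a' then (Fintype.card (V n) : ℝ) else 0) := by
        refine Finset.sum_congr rfl fun a' _ => ?_
        rw [sum_chi_mul, sum_chi, if_neg ha, sub_zero]
    _ = (Fintype.card (V n) : ℝ) * lam a := by
        simp [mul_ite, Finset.sum_ite_eq, mul_comm]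

lemma fourier_inv {n : ℕ} (hn : 1 ≤ n) (c : V n → ℝ) (hc0 : c 0 = 0) (b : V n) :
    ∑ a : V n, (if a = 0 then 0 else
        (Fintype.card (V n) : ℝ)⁻¹ * ∑ k : V n, chi a k * c k) * (chi a b - 1)
      = c b := by
  have hN : (0 : ℝ) < (Fintype.card (V n) : ℝ) := by
    exact_mod_cast Fintype.card_pos
  calc ∑ a : V n, (if a = 0 then 0 else
        (Fintype.card (V n) : ℝ)⁻¹ * ∑ k : V n, chi a k * c k) * (chi a b - 1)
      = ∑ a : V n, ((Fintype.card (V n) : ℝ)⁻¹ * ∑ k : V n, chi a k * c k) * (chi a b - 1) := by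
        refine Finset.sum_congr rfl fun a _ => ?_
        by_cases h : a = 0
        · subst h; rw [if_pos rfl, chi_zero_left]; ring
        · rw [if_neg h]
    _ = (Fintype.card (V n) : ℝ)⁻¹ *
          ∑ a : V n, ∑ k : V n, c k * (chi a k * chi a b - chi a k) := by
        rw [Finset.mul_sum]
        refine Finset.sum_congr rfl fun a _ => ?_
        rw [mul_assoc]
        congr 1
        rw [Finset.sum_mul]
        exact Finset.sum_congr rfl fun k _ => by ring
    _ = (Fintype.card (V n) : ℝ)⁻¹ *
          ∑ k : V n, c k * ((∑ a : V n, chi a k * chi a b) - ∑ a : V n, chi a k) := by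
        rw [Finset.sum_comm]
        congr 1
        refine Finset.sum_congr rfl fun k _ => ?_
        rw [mul_sub, Finset.mul_sum, Finset.mul_sum, ← Finset.sum_sub_distrib]
        exact Finset.sum_congr rfl fun a _ => by ring
    _ = (Fintype.card (V n) : ℝ)⁻¹ *
          ∑ k : V n, c k * ((if k = b then (Fintype.card (V n) : ℝ) else 0)
            - (if k = 0 then (Fintype.card (V n) : ℝ) else 0)) := by
        refine congrArg _ (Finset.sum_congr rfl fun k _ => ?_)
        rw [sum_chi_mul, sum_chi]
    _ = c b := by
        simp only [mul_sub, Finset.sum_sub_distrib, mul_ite, mul_zero,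
          Finset.sum_ite_eq', Finset.mem_univ, if_true, hc0, zero_mul, sub_zero]
        field_simp

/-- The Pauli-Lindblad generator `L_λ(ρ) = Σ_a λ_a·(P_a ρ P_a − ρ)` with parameters `λ`. -/
noncomputable def PLgen (n : ℕ) (lam : V n → ℝ) : Mq n →ₗ[ℂ] Mq n :=
  ∑ a : V n, ((lam a : ℂ) •
    ((LinearMap.mulRight ℂ (P a)).comp (LinearMap.mulLeft ℂ (P a)) - LinearMap.id))


lemma P_ne_zero {n : ℕ} (b : V n) : P b ≠ 0 := by
  intro h
  have h1 : (1 : Mq n) = 0 := by rw [← P_mul_P_self b, h, zero_mul]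
  have h2 := (Matrix.ext_iff.mpr h1) (fun _ => 0) (fun _ => 0)
  simp [Matrix.one_apply] at h2

lemma PLgen_apply_P {n : ℕ} (lam : V n → ℝ) (b : V n) :
    PLgen n lam (P b) = ((∑ a : V n, lam a * (chi a b - 1) : ℝ) : ℂ) • P b := by
  rw [PLgen, LinearMap.sum_apply]
  have h : ∀ a : V n, ((lam a : ℂ) •
      ((LinearMap.mulRight ℂ (P a)).comp (LinearMap.mulLeft ℂ (P a)) - LinearMap.id)
        : Mq n →ₗ[ℂ] Mq n) (P b)
      = ((lam a : ℂ) * ((chi a b : ℝ) - 1)) • P b := by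
    intro a
    simp only [LinearMap.smul_apply, LinearMap.sub_apply, LinearMap.coe_comp,
      Function.comp_apply, LinearMap.mulRight_apply, LinearMap.mulLeft_apply,
      LinearMap.id_apply]
    rw [P_conj, smul_sub, smul_smul, ← sub_smul]
    congr 1
    push_cast
    ring
  rw [Finset.sum_congr rfl fun a _ => h a, ← Finset.sum_smul]
  congr 1
  push_cast
  exact Finset.sum_congr rfl fun x _ => by ring

/-- The Pauli channel as a linear map. -/
noncomputable def Emap (n : ℕ) (p : V n → ℝ) : Mq n →ₗ[ℂ] Mq n :=
  ∑ a : V n, ((p a : ℂ) • ((LinearMap.mulRight ℂ (P a)).comp (LinearMap.mulLeft ℂ (P a))))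

lemma Emap_apply {n : ℕ} (p : V n → ℝ) (ρ : Mq n) :
    Emap n p ρ = ∑ a : V n, (p a : ℂ) • (P a * ρ * P a) := by
  rw [Emap, LinearMap.sum_apply]
  exact Finset.sum_congr rfl fun a _ => by
    simp [LinearMap.mulRight_apply, LinearMap.mulLeft_apply, mul_assoc]


theorem nonneg_PL_representation_iff (n : ℕ) (hn : 1 ≤ n) (p : V n → ℝ)
    (hp : ∀ a : V n, 0 ≤ p a) (hsum : ∑ a : V n, p a = 1)
    (f : V n → ℝ) (hf : ∀ a : V n, f a = ∑ k : V n, chi a k * p k)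
    (hfpos : ∀ a : V n, 0 < f a) :
    (∃ lam : V n → ℝ, (∀ a : V n, 0 ≤ lam a) ∧
        ∀ ρ : Mq n,
          NormedSpace.exp (LinearMap.toContinuousLinearMap (PLgen n lam)) ρ
            = ∑ a : V n, (p a : ℂ) • (P a * ρ * P a)) ↔
      (∀ a : V n, a ≠ 0 →
        0 ≤ ∑ k ∈ Finset.univ.filter (fun k : V n => k ≠ 0), chi a k * Real.log (f k)) := by

  have hN : (0 : ℝ) < (Fintype.card (V n) : ℝ) := by exact_mod_cast Fintype.card_pos
  have hf0 : f 0 = 1 := by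
    rw [hf]
    simp only [chi_zero_left, one_mul]
    exact hsum
  have hc0 : Real.log (f 0) = 0 := by simp [hf0]
  -- filtered sum = full sum
  have hfilter : ∀ a : V n,
      ∑ k ∈ Finset.univ.filter (fun k : V n => k ≠ 0), chi a k * Real.log (f k)
        = ∑ k : V n, chi a k * Real.log (f k) := by
    intro a
    rw [Finset.sum_filter]
    refine Finset.sum_congr rfl fun k _ => ?_
    by_cases h : k = 0
    · subst h; simp [hc0]
    · rw [if_pos h]
  -- main equivalence: channel equality iff eigenvalue equations
  have main : ∀ lam : V n → ℝ,
      (∀ ρ : Mq n,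
          NormedSpace.exp (LinearMap.toContinuousLinearMap (PLgen n lam)) ρ
            = ∑ a : V n, (p a : ℂ) • (P a * ρ * P a)) ↔
      (∀ b : V n, ∑ a : V n, lam a * (chi a b - 1) = Real.log (f b)) := by
    intro lam
    have hA : ∀ b : V n, (LinearMap.toContinuousLinearMap (PLgen n lam)) (P b)
        = ((∑ a : V n, lam a * (chi a b - 1) : ℝ) : ℂ) • P b := by
      intro b
      rw [LinearMap.coe_toContinuousLinearMap']
      exact PLgen_apply_P lam b
    have hexp : ∀ b : V n,
        NormedSpace.exp (LinearMap.toContinuousLinearMap (PLgen n lam)) (P b)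
          = Complex.exp ((∑ a : V n, lam a * (chi a b - 1) : ℝ) : ℂ) • P b := by
      intro b
      exact exp_eigen _ _ _ (hA b)
    have hE : ∀ b : V n, (∑ a : V n, (p a : ℂ) • (P a * P b * P a))
        = ((f b : ℝ) : ℂ) • P b := by
      intro b
      have : ∀ a : V n, (p a : ℂ) • (P a * P b * P a)
          = ((p a * chi a b : ℝ) : ℂ) • P b := by
        intro a
        rw [P_conj, smul_smul]
        push_cast
        ring_nf
      rw [Finset.sum_congr rfl fun a _ => this a, ← Finset.sum_smul]
      congr 1
      rw [hf b]
      push_cast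
      exact Finset.sum_congr rfl fun k _ => by rw [chi_comm]; ring
    constructor
    · intro h b
      have h1 := h (P b)
      rw [hexp b, hE b] at h1
      have h2 : (Complex.exp ((∑ a : V n, lam a * (chi a b - 1) : ℝ) : ℂ)
          - ((f b : ℝ) : ℂ)) • P b = 0 := by
        rw [sub_smul, h1, sub_self]
      rcases smul_eq_zero.mp h2 with h3 | h3
      · have h4 : Complex.exp ((∑ a : V n, lam a * (chi a b - 1) : ℝ) : ℂ)
            = ((f b : ℝ) : ℂ) := by linear_combination h3
        rw [← Complex.ofReal_exp] at h4
        have h5 : Real.exp (∑ a : V n, lam a * (chi a b - 1)) = f b :=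
          Complex.ofReal_injective h4
        show ∑ a : V n, lam a * (chi a b - 1) = Real.log (f b)
        rw [← h5, Real.log_exp]
      · exact absurd h3 (P_ne_zero b)
    · intro h ρ
      have heq : ((NormedSpace.exp (LinearMap.toContinuousLinearMap (PLgen n lam))
          : Mq n →L[ℂ] Mq n) : Mq n →ₗ[ℂ] Mq n) = Emap n p := by
        apply LinearMap.ext_on (P_span_top n)
        rintro _ ⟨b, rfl⟩
        rw [ContinuousLinearMap.coe_coe, hexp b, Emap_apply, hE b, h b]
        congr 1
        rw [← Complex.ofReal_exp]
        congr 1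
        exact Real.exp_log (hfpos b)
      have := congrFun (congrArg (fun (g : Mq n →ₗ[ℂ] Mq n) => ⇑g) heq) ρ
      rw [ContinuousLinearMap.coe_coe] at this
      rw [this, Emap_apply]
  constructor
  · rintro ⟨lam, hnn, hch⟩ a ha
    have h := (main lam).mp hch
    rw [hfilter a]
    have h2 : ∑ k : V n, chi a k * Real.log (f k)
        = (Fintype.card (V n) : ℝ) * lam a := by
      rw [← fourier_fwd lam a ha]
      exact Finset.sum_congr rfl fun k _ => by rw [h k]
    rw [h2]
    exact mul_nonneg (le_of_lt hN) (hnn a)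
  · intro h
    refine ⟨fun a => if a = 0 then 0 else
      (Fintype.card (V n) : ℝ)⁻¹ * ∑ k : V n, chi a k * Real.log (f k), ?_, ?_⟩
    · intro a
      by_cases ha : a = 0
      · simp [ha]
      · simp only [if_neg ha]
        have := h a ha
        rw [hfilter a] at this
        exact mul_nonneg (le_of_lt (inv_pos.mpr hN)) this
    · refine (main _).mpr fun b => ?_
      exact fourier_inv hn (fun k => Real.log (f k)) hc0 b
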